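/- Let A be a Novikov algebra over a field k of characteristic zero and let g_A be its associated Lie algebra (with bracket [x,y] = x·y − y·x). Then every term Z_i(A) of the upper central series of g_A is a two-sided ideal of the Novikov algebra A. -/
import Mathlib


variable {k A : Type*} [Field k] [CharZero k] [AddCommGroup A] [Module k A]

/-- The upper central series of the Lie algebra `g_A` associated to `(A, mul)`
(with bracket `[x,y] = x·y − y·x`), as a chain of subsets:
`Z₀ = {0}` and `Z_{i+1} = {x | [x,y] ∈ Z_i for all y}`. -/
def ucs (mul : A →ₗ[k] A →ₗ[k] A) : ℕ → Set A
  | 0 => {0}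
  | i + 1 => {x : A | ∀ y : A, mul x y - mul y x ∈ ucs mul i}

/-- Let `A` be a Novikov algebra over a field `k` of characteristic
zero. Every term `Z_i(A)` of the upper central series of the associated Lie algebra
`g_A` is a two-sided ideal of `A`, i.e. a `k`-subspace of `A` closed under left and
right multiplication by arbitrary elements of `A`. -/
theorem novikov_upperCentralSeries_ideal
    (mul : A →ₗ[k] A →ₗ[k] A)
    (hls : ∀ x y z : A,
      mul x (mul y z) - mul (mul x y) z = mul y (mul x z) - mul (mul y x) z)
    (hnov : ∀ x y z : A, mul (mul x y) z = mul (mul x z) y) :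
    ∀ i : ℕ, ∃ I : Submodule k A, (I : Set A) = ucs mul i ∧
      ∀ a : A, ∀ x ∈ I, mul a x ∈ I ∧ mul x a ∈ I := by
  intro i
  induction i with
  | zero =>
    refine ⟨⊥, ?_, ?_⟩
    · simp [ucs]
    · intro a x hx
      simp only [Submodule.mem_bot] at hx
      simp [hx]
  | succ i ih =>
    obtain ⟨I, hI, hcl⟩ := ih
    refine ⟨{ carrier := {x : A | ∀ y : A, mul x y - mul y x ∈ I}
              add_mem' := ?_
              zero_mem' := ?_
              smul_mem' := ?_ }, ?_, ?_⟩
    · intro u v hu hv y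
      have h : mul (u + v) y - mul y (u + v)
          = (mul u y - mul y u) + (mul v y - mul y v) := by
        simp only [map_add, LinearMap.add_apply]
        abel
      rw [h]
      exact I.add_mem (hu y) (hv y)
    · intro y
      simp
    · intro c u hu y
      have h : mul (c • u) y - mul y (c • u) = c • (mul u y - mul y u) := by
        simp only [map_smul, LinearMap.smul_apply, smul_sub]
      rw [h]
      exact I.smul_mem c (hu y)
    · ext x
      simp only [Submodule.mem_mk, AddSubmonoid.mem_mk, AddSubsemigroup.mem_mk,
        Set.mem_setOf_eq, SetLike.mem_coe]
      show (∀ y : A, mul x y - mul y x ∈ I) ↔ x ∈ ucs mul (i + 1)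
      have : ∀ z : A, z ∈ I ↔ z ∈ ucs mul i := by
        intro z
        rw [← hI, SetLike.mem_coe]
      constructor
      · intro h y
        exact (this _).mp (h y)
      · intro h y
        exact (this _).mpr (h y)
    · intro a x hx
      have hx' : ∀ y : A, mul x y - mul y x ∈ I := hx
      constructor
      · -- mul a x ∈ J
        intro y
        have key1 : mul (mul a x) y - mul y (mul a x)
            = (mul (mul a y) x - mul x (mul a y))
              + mul a (mul x y - mul y x) + mul (mul x y - mul y x) a := by
          have h1 := hls a x y
          rw [hnov x a y] at h1
          -- h1 : a(xy) - (ax)y = x(ay) - (xy)a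
          have e1 : mul a (mul x y)
              = (mul x (mul a y) - mul (mul x y) a) + mul (mul a x) y :=
            sub_eq_iff_eq_add.mp h1
          have h2 := hls y a x
          rw [hnov y a x] at h2
          -- h2 : y(ax) - (yx)a = a(yx) - (ay)x
          have e2 : mul y (mul a x)
              = (mul a (mul y x) - mul (mul a y) x) + mul (mul y x) a :=
            sub_eq_iff_eq_add.mp h2
          simp only [map_sub, LinearMap.sub_apply]
          rw [e1, e2, hnov a x y]
          abel
        rw [key1]
        have m1 : mul (mul a y) x - mul x (mul a y) ∈ I := by
          have := I.neg_mem (hx' (mul a y))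
          rwa [neg_sub] at this
        exact I.add_mem (I.add_mem m1 (hcl a _ (hx' y)).1) (hcl a _ (hx' y)).2
      · -- mul x a ∈ J
        intro y
        have key2 : mul (mul x a) y - mul y (mul x a)
            = (mul (mul x y - mul y x) a + mul (mul x y - mul y x) a)
              - (mul x (mul y a) - mul (mul y a) x) := by
          have h := hls y x a
          -- h : y(xa) - (yx)a = x(ya) - (xa)... careful
          have e : mul y (mul x a)
              = (mul x (mul y a) - mul (mul x y) a) + mul (mul y x) a :=
            sub_eq_iff_eq_add.mp h
          simp only [map_sub, LinearMap.sub_apply]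
          rw [e, hnov x a y, hnov y a x]
          abel
        rw [key2]
        have m1 : mul (mul y a) x - mul x (mul y a) ∈ I := by
          have := I.neg_mem (hx' (mul y a))
          rwa [neg_sub] at this
        have m1' : mul (mul x y - mul y x) a ∈ I := (hcl a _ (hx' y)).2
        have : (mul (mul x y - mul y x) a + mul (mul x y - mul y x) a)
            - (mul x (mul y a) - mul (mul y a) x) ∈ I := by
          refine I.sub_mem (I.add_mem m1' m1') ?_
          have := I.neg_mem m1
          rwa [neg_sub] at this
        exact this
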